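/- Fix κ > 0, n ≥ 2, p ∈ (1, ∞) with conjugate exponent p', and let v₁, v₂ : ℝ^{n-1} × (0,∞) → ℂ be measurable. Let v_{n-1} denote the volume of the unit ball in ℝ^{n-1}, and for a measurable u on the upper half space define the area function A_κ u(x') := (∫_{Γ_κ(x')} |u(y', t)|² t^{2-n} dy' dt)^{1/2}. Then v_{n-1} κ^{n-1} ∫_{ℝ^{n-1} × (0,∞)} |v₁(y', t)| |v₂(y', t)| t dy' dt ≤ ‖A_κ v₁‖_{L^p(ℝ^{n-1})} ‖A_κ v₂‖_{L^{p'}(ℝ^{n-1})}. -/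

import Mathlib

open MeasureTheory Real Set Filter Topology
open scoped ENNReal NNReal

/-- The nontangential cone `Γ_κ(x') = {(y',t) : t > 0, |x'-y'| < κ t}`. -/
def cone14 (n : ℕ) (κ : ℝ) (x' : EuclideanSpace ℝ (Fin (n - 1))) :
    Set (EuclideanSpace ℝ (Fin (n - 1)) × ℝ) :=
  {p | 0 < p.2 ∧ dist x' p.1 < κ * p.2}

/-- The area function `A_κ u(x') = (∫_{Γ_κ(x')} |u(y',t)|² t^{2-n} dy' dt)^{1/2}`. -/
noncomputable def areaFn14 (n : ℕ) (κ : ℝ)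
    (u : EuclideanSpace ℝ (Fin (n - 1)) × ℝ → ℂ)
    (x' : EuclideanSpace ℝ (Fin (n - 1))) : ℝ≥0∞ :=
  (∫⁻ p in cone14 n κ x',
    (‖u p‖₊ : ℝ≥0∞) ^ 2 * ENNReal.ofReal (p.2 ^ ((2 : ℝ) - n))) ^ ((1 : ℝ) / 2)

namespace Aux14

variable {n : ℕ} {κ : ℝ}

abbrev E (n : ℕ) := EuclideanSpace ℝ (Fin (n - 1))

/-- The product cone set. -/
def T (n : ℕ) (κ : ℝ) : Set (E n × (E n × ℝ)) :=
  {z | 0 < z.2.2 ∧ dist z.1 z.2.1 < κ * z.2.2}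

lemma measurableSet_T : MeasurableSet (T n κ) := by
  apply MeasurableSet.inter
  · exact measurableSet_lt measurable_const (measurable_snd.snd)
  · exact measurableSet_lt (measurable_fst.dist measurable_snd.fst)
      (measurable_const.mul measurable_snd.snd)

lemma measurableSet_cone (x' : E n) : MeasurableSet (cone14 n κ x') := by
  apply MeasurableSet.inter
  · exact measurableSet_lt measurable_const measurable_snd
  · exact measurableSet_lt (measurable_const.dist measurable_fst)
      (measurable_const.mul measurable_snd)

lemma mem_T_iff (x' : E n) (q : E n × ℝ) : (x', q) ∈ T n κ ↔ q ∈ cone14 n κ x' := Iff.rfl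

lemma indicator_eq (f : E n × ℝ → ℝ≥0∞) (x' : E n) (q : E n × ℝ) :
    (cone14 n κ x').indicator f q = (T n κ).indicator (fun z => f z.2) (x', q) := rfl

lemma measurableSet_S : MeasurableSet {q : E n × ℝ | 0 < q.2} :=
  measurableSet_lt measurable_const measurable_snd

/-- Key Fubini identity. -/
lemma key (hκ : 0 < κ) (f : E n × ℝ → ℝ≥0∞) (hf : Measurable f) :
    ∫⁻ x', ∫⁻ q in cone14 n κ x', f q =
      ∫⁻ q in {q : E n × ℝ | 0 < q.2},
        f q * (ENNReal.ofReal ((κ * q.2) ^ (n - 1)) *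
          volume (Metric.ball (0 : E n) 1)) := by
  have hTm : Measurable fun z : E n × (E n × ℝ) => (T n κ).indicator (fun z => f z.2) z :=
    (hf.comp measurable_snd).indicator measurableSet_T
  calc ∫⁻ x', ∫⁻ q in cone14 n κ x', f q
      = ∫⁻ x', ∫⁻ q, (T n κ).indicator (fun z => f z.2) (x', q) := by
        refine lintegral_congr fun x' => ?_
        rw [← lintegral_indicator (measurableSet_cone x')]
        exact lintegral_congr fun q => indicator_eq f x' q
    _ = ∫⁻ q, ∫⁻ x', (T n κ).indicator (fun z => f z.2) (x', q) :=
        lintegral_lintegral_swap hTm.aemeasurable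
    _ = ∫⁻ q, {q : E n × ℝ | 0 < q.2}.indicator
          (fun q => f q * (ENNReal.ofReal ((κ * q.2) ^ (n - 1)) *
            volume (Metric.ball (0 : E n) 1))) q := by
        refine lintegral_congr fun q => ?_
        by_cases hq : 0 < q.2
        · have h1 : ∀ x' : E n, (T n κ).indicator (fun z => f z.2) (x', q)
              = (Metric.ball q.1 (κ * q.2)).indicator (fun _ => f q) x' := by
            intro x'
            by_cases hx : x' ∈ Metric.ball q.1 (κ * q.2)
            · rw [Set.indicator_of_mem hx, Set.indicator_of_mem]
              exact ⟨hq, Metric.mem_ball.mp hx⟩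
            · rw [Set.indicator_of_notMem hx, Set.indicator_of_notMem]
              exact fun h => hx (Metric.mem_ball.mpr h.2)
          rw [lintegral_congr h1, lintegral_indicator (measurableSet_ball),
            setLIntegral_const,
            Set.indicator_of_mem (show q ∈ {q : E n × ℝ | 0 < q.2} from hq),
            Measure.addHaar_ball_of_pos _ _ (mul_pos hκ hq), finrank_euclideanSpace_fin]
        · have h1 : ∀ x' : E n, (T n κ).indicator (fun z => f z.2) (x', q) = 0 := by
            intro x'
            apply Set.indicator_of_notMem
            exact fun h => hq h.1
          rw [lintegral_congr h1, lintegral_zero,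
            Set.indicator_of_notMem (show q ∉ {q : E n × ℝ | 0 < q.2} from hq)]
    _ = _ := lintegral_indicator measurableSet_S _

lemma measurable_areaFn (u : E n × ℝ → ℂ) (hu : Measurable u) :
    Measurable (areaFn14 n κ u) := by
  have hF : Measurable fun q : E n × ℝ =>
      (‖u q‖₊ : ℝ≥0∞) ^ 2 * ENNReal.ofReal (q.2 ^ ((2 : ℝ) - n)) :=
    ((hu.nnnorm.coe_nnreal_ennreal).pow_const 2).mul
      ((measurable_snd.pow_const ((2:ℝ) - n)).ennreal_ofReal)
  have h1 : ∀ x', (∫⁻ q in cone14 n κ x',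
      (‖u q‖₊ : ℝ≥0∞) ^ 2 * ENNReal.ofReal (q.2 ^ ((2 : ℝ) - n)))
      = ∫⁻ q, (T n κ).indicator (fun z =>
          (‖u z.2‖₊ : ℝ≥0∞) ^ 2 * ENNReal.ofReal (z.2.2 ^ ((2 : ℝ) - n))) (x', q) := by
    intro x'
    rw [← lintegral_indicator (measurableSet_cone x')]
    exact lintegral_congr fun q => indicator_eq _ x' q
  unfold areaFn14
  simp_rw [h1]
  exact (Measurable.lintegral_prod_right'
    ((hF.comp measurable_snd).indicator measurableSet_T)).pow_const _

end Aux14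

/-- `v_{n-1} κ^{n-1} ∬ |v₁||v₂| t dy' dt ≤ ‖A_κ v₁‖_{L^p} ‖A_κ v₂‖_{L^{p'}}` where
`v_{n-1}` is the volume of the unit ball in `ℝ^{n-1}` and `1/p + 1/p' = 1`. -/
theorem stmt14 (n : ℕ) (hn : 2 ≤ n) (κ : ℝ) (hκ : 0 < κ) (p p' : ℝ)
    (hp : 1 < p) (hpp' : 1 / p + 1 / p' = 1)
    (v₁ v₂ : EuclideanSpace ℝ (Fin (n - 1)) × ℝ → ℂ)
    (hv₁ : Measurable v₁) (hv₂ : Measurable v₂) :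
    ENNReal.ofReal
        ((volume (Metric.ball (0 : EuclideanSpace ℝ (Fin (n - 1))) 1)).toReal *
          κ ^ (n - 1)) *
      ∫⁻ q in {q : EuclideanSpace ℝ (Fin (n - 1)) × ℝ | 0 < q.2},
        (‖v₁ q‖₊ : ℝ≥0∞) * (‖v₂ q‖₊ : ℝ≥0∞) * ENNReal.ofReal q.2
    ≤ (∫⁻ x', areaFn14 n κ v₁ x' ^ p) ^ (1 / p) *
      (∫⁻ x', areaFn14 n κ v₂ x' ^ p') ^ (1 / p') := by
  classical
  set volB := volume (Metric.ball (0 : Aux14.E n) 1) with hvolB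
  have hvolB_ne_top : volB ≠ ∞ := (measure_ball_lt_top).ne
  -- the middle integrand
  set f₀ : Aux14.E n × ℝ → ℝ≥0∞ := fun q =>
    (‖v₁ q‖₊ : ℝ≥0∞) * (‖v₂ q‖₊ : ℝ≥0∞) * ENNReal.ofReal (q.2 ^ ((2 : ℝ) - n)) with hf₀
  have hf₀m : Measurable f₀ := by
    rw [hf₀]
    exact ((hv₁.nnnorm.coe_nnreal_ennreal).mul (hv₂.nnnorm.coe_nnreal_ennreal)).mul
      ((measurable_snd.pow_const ((2:ℝ) - n)).ennreal_ofReal)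
  -- cast lemma
  have hcast : ((n - 1 : ℕ) : ℝ) = (n : ℝ) - 1 := by
    have : (1 : ℕ) ≤ n := by omega
    push_cast [this]; ring
  -- Step 1: rewrite LHS
  have step1 : ENNReal.ofReal (volB.toReal * κ ^ (n - 1)) *
      ∫⁻ q in {q : Aux14.E n × ℝ | 0 < q.2},
        (‖v₁ q‖₊ : ℝ≥0∞) * (‖v₂ q‖₊ : ℝ≥0∞) * ENNReal.ofReal q.2
      = ∫⁻ q in {q : Aux14.E n × ℝ | 0 < q.2},
          f₀ q * (ENNReal.ofReal ((κ * q.2) ^ (n - 1)) * volB) := by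
    rw [ENNReal.ofReal_mul ENNReal.toReal_nonneg, ENNReal.ofReal_toReal hvolB_ne_top,
      ← lintegral_const_mul _ (show Measurable fun q : Aux14.E n × ℝ =>
        (‖v₁ q‖₊ : ℝ≥0∞) * (‖v₂ q‖₊ : ℝ≥0∞) * ENNReal.ofReal q.2 from
        ((hv₁.nnnorm.coe_nnreal_ennreal).mul
        (hv₂.nnnorm.coe_nnreal_ennreal)).mul (measurable_snd.ennreal_ofReal))]
    refine setLIntegral_congr_fun Aux14.measurableSet_S ?_
    intro q hq
    beta_reduce
    simp only [Set.mem_setOf_eq] at hq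
    have ht : (0 : ℝ) < q.2 := hq
    have key : ENNReal.ofReal (q.2 ^ ((2 : ℝ) - n)) * ENNReal.ofReal (q.2 ^ (n - 1))
        = ENNReal.ofReal q.2 := by
      rw [← ENNReal.ofReal_mul (Real.rpow_nonneg ht.le _)]
      congr 1
      rw [← Real.rpow_natCast q.2 (n - 1), ← Real.rpow_add ht, hcast]
      norm_num
    rw [mul_pow, ENNReal.ofReal_mul (pow_nonneg hκ.le _)]
    calc volB * ENNReal.ofReal (κ ^ (n - 1)) *
          ((‖v₁ q‖₊ : ℝ≥0∞) * (‖v₂ q‖₊ : ℝ≥0∞) * ENNReal.ofReal q.2)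
        = (‖v₁ q‖₊ : ℝ≥0∞) * (‖v₂ q‖₊ : ℝ≥0∞) *
            (ENNReal.ofReal (q.2 ^ ((2 : ℝ) - n)) * ENNReal.ofReal (q.2 ^ (n - 1))) *
            (ENNReal.ofReal (κ ^ (n - 1)) * volB) := by rw [key]; ring
      _ = f₀ q * (ENNReal.ofReal (κ ^ (n - 1)) * ENNReal.ofReal (q.2 ^ (n - 1)) * volB) := by
            rw [hf₀]; ring
  rw [step1, ← Aux14.key hκ f₀ hf₀m]
  -- Step 2: pointwise Cauchy-Schwarz on each cone
  have hA₁ := Aux14.measurable_areaFn (κ := κ) v₁ hv₁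
  have hA₂ := Aux14.measurable_areaFn (κ := κ) v₂ hv₂
  have step2 : ∀ x' : Aux14.E n, (∫⁻ q in cone14 n κ x', f₀ q)
      ≤ areaFn14 n κ v₁ x' * areaFn14 n κ v₂ x' := by
    intro x'
    set μx := volume.restrict (cone14 n κ x')
    set g₁ : Aux14.E n × ℝ → ℝ≥0∞ := fun q =>
      (‖v₁ q‖₊ : ℝ≥0∞) * ENNReal.ofReal (q.2 ^ (((2 : ℝ) - n) / 2)) with hg₁
    set g₂ : Aux14.E n × ℝ → ℝ≥0∞ := fun q =>
      (‖v₂ q‖₊ : ℝ≥0∞) * ENNReal.ofReal (q.2 ^ (((2 : ℝ) - n) / 2)) with hg₂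
    have hg₁m : Measurable g₁ := (hv₁.nnnorm.coe_nnreal_ennreal).mul
      ((measurable_snd.pow_const (((2:ℝ) - n)/2)).ennreal_ofReal)
    have hg₂m : Measurable g₂ := (hv₂.nnnorm.coe_nnreal_ennreal).mul
      ((measurable_snd.pow_const (((2:ℝ) - n)/2)).ennreal_ofReal)
    have h22 : Real.HolderConjugate 2 2 := Real.holderConjugate_iff.mpr ⟨one_lt_two, by norm_num⟩
    have CS := ENNReal.lintegral_mul_le_Lp_mul_Lq μx h22 hg₁m.aemeasurable hg₂m.aemeasurable
    have heq : ∫⁻ q in cone14 n κ x', f₀ q = ∫⁻ q, (g₁ * g₂) q ∂μx := by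
      refine setLIntegral_congr_fun (Aux14.measurableSet_cone x')
        ?_
      intro q hq
      have ht : (0 : ℝ) < q.2 := hq.1
      simp only [Pi.mul_apply, hg₁, hg₂, hf₀]
      have hh : ENNReal.ofReal (q.2 ^ ((2 : ℝ) - n))
          = ENNReal.ofReal (q.2 ^ (((2 : ℝ) - n) / 2)) *
            ENNReal.ofReal (q.2 ^ (((2 : ℝ) - n) / 2)) := by
        rw [← ENNReal.ofReal_mul (Real.rpow_nonneg ht.le _), ← Real.rpow_add ht, add_halves]
      rw [hh]; ring
    have hsq : ∀ (v : Aux14.E n × ℝ → ℂ) (g : Aux14.E n × ℝ → ℝ≥0∞),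
        (g = fun q => (‖v q‖₊ : ℝ≥0∞) * ENNReal.ofReal (q.2 ^ (((2 : ℝ) - n) / 2))) →
        (∫⁻ q, g q ^ (2 : ℝ) ∂μx) ^ ((1:ℝ) / 2) = areaFn14 n κ v x' := by
      intro v g hg
      unfold areaFn14
      congr 1
      refine setLIntegral_congr_fun (Aux14.measurableSet_cone x')
        ?_
      intro q hq
      have ht : (0 : ℝ) < q.2 := hq.1
      subst hg
      beta_reduce
      rw [ENNReal.mul_rpow_of_nonneg _ _ (by norm_num : (0:ℝ) ≤ 2)]
      congr 1
      · rw [show (2:ℝ) = ((2:ℕ):ℝ) by norm_num, ENNReal.rpow_natCast]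
      · rw [ENNReal.ofReal_rpow_of_nonneg (Real.rpow_nonneg ht.le _) (by norm_num : (0:ℝ) ≤ 2),
          ← Real.rpow_mul ht.le]
        norm_num
    rw [heq, ← hsq v₁ g₁ hg₁, ← hsq v₂ g₂ hg₂]
    exact CS
  -- Step 3: Hölder
  have hpp : Real.HolderConjugate p p' := Real.holderConjugate_iff.mpr ⟨hp, by rw [← one_div, ← one_div]; exact hpp'⟩
  calc ∫⁻ x', ∫⁻ q in cone14 n κ x', f₀ q
      ≤ ∫⁻ x', areaFn14 n κ v₁ x' * areaFn14 n κ v₂ x' := lintegral_mono step2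
    _ ≤ _ := ENNReal.lintegral_mul_le_Lp_mul_Lq volume hpp hA₁.aemeasurable hA₂.aemeasurable
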